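/- Let Θ be a finite directed graph with all in-degrees and out-degrees at most 2 and no (1,1)-vertices, whose canonical path decomposition has components partitioned into sets Q_{LR} (paths from a source-edge to a sink-edge), Q_{L0} (paths with a source-edge but no sink-edge), Q_{0R} (paths with a sink-edge but no source-edge), and the remaining components having an even number of source-edges and sink-edges each. Suppose the total number of source-edges of Θ is 2k−1 and the total number of sink-edges is 2i−1. Then there exists an alternating 2-coloring of the edges of Θ in red and green such that exactly k source-edges and exactly i sink-edges are red. -/
import Mathlib

open Finset

def inDeg {V E : Type*} [Fintype E] [DecidableEq V] (vt : E → V) (v : V) : ℕ :=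
  (Finset.univ.filter fun e => vt e = v).card

def outDeg {V E : Type*} [Fintype E] [DecidableEq V] (vs : E → V) (v : V) : ℕ :=
  (Finset.univ.filter fun e => vs e = v).card

/-- A valid (alternating) `2`-coloring (`true` = red, `false` = green). -/
def ValidColoring {V E : Type*} (vs vt : E → V) (c : E → Bool) : Prop :=
  (∀ e f : E, e ≠ f → vt e = vt f → c e ≠ c f) ∧
  (∀ e f : E, e ≠ f → vs e = vs f → c e ≠ c f)

open Finset

set_option linter.unusedSectionVars false
namespace BalColor

variable {E : Type*}

def tok (σ τ : E → E) (e : E) (s : Bool) : Prop := (if s then τ else σ) e = e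

def Good (σ τ : E → E) (c : E → Bool) (comp : E → E) : Prop :=
  (∀ e, σ e ≠ e → c (σ e) ≠ c e) ∧
  (∀ e, τ e ≠ e → c (τ e) ≠ c e) ∧
  (∀ e, comp (σ e) = comp e) ∧
  (∀ e, comp (τ e) = comp e) ∧
  ∀ e f s t, (e ≠ f ∨ s ≠ t) → comp e = comp f →
      tok σ τ e s → tok σ τ f t → ((c e = c f) ↔ s ≠ t)

variable [DecidableEq E]

def res (σ : E → E) (e₀ : E) (x : {y : E // y ≠ e₀}) : {y : E // y ≠ e₀} :=
  if h : σ x.1 = e₀ then x else ⟨σ x.1, h⟩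

lemma res_invol {σ : E → E} (hσ : Function.Involutive σ) (e₀ : E) :
    Function.Involutive (res σ e₀) := by
  intro x
  by_cases h : σ x.1 = e₀
  · simp [res, h]
  · have h2 : (res σ e₀ x) = ⟨σ x.1, h⟩ := dif_neg h
    rw [h2]
    have h3 : σ (σ x.1) = x.1 := hσ x.1
    have h4 : ¬ (σ ((⟨σ x.1, h⟩ : {y : E // y ≠ e₀}).1) = e₀) := by
      simpa [h3] using x.2
    simp only [res, dif_neg h4]
    exact Subtype.ext h3

lemma tok_res {σ τ : E → E} {e₀ e : E} {s : Bool} (he : e ≠ e₀) (h : tok σ τ e s) :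
    tok (res σ e₀) (res τ e₀) ⟨e, he⟩ s := by
  cases s
  · show res σ e₀ ⟨e, he⟩ = ⟨e, he⟩
    have h' : σ e = e := h
    have hne : σ e ≠ e₀ := by rw [h']; exact he
    show dite _ _ _ = _
    rw [dif_neg hne]
    exact Subtype.ext h'
  · show res τ e₀ ⟨e, he⟩ = ⟨e, he⟩
    have h' : τ e = e := h
    have hne : τ e ≠ e₀ := by rw [h']; exact he
    show dite _ _ _ = _
    rw [dif_neg hne]
    exact Subtype.ext h'

lemma extendA {σ τ : E → E} {e₀ : E} (hσ0 : σ e₀ = e₀) (hτ0 : τ e₀ = e₀)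
    (hσ : Function.Involutive σ) (hτ : Function.Involutive τ)
    {c' : {y : E // y ≠ e₀} → Bool} {comp' : {y : E // y ≠ e₀} → {y : E // y ≠ e₀}}
    (hg : Good (res σ e₀) (res τ e₀) c' comp') :
    ∃ (c : E → Bool) (comp : E → E), Good σ τ c comp := by
  classical
  have hσne : ∀ e : E, e ≠ e₀ → σ e ≠ e₀ := by
    intro e he hh
    exact he (by rw [← hσ0] at hh; exact hσ.injective hh)
  have hτne : ∀ e : E, e ≠ e₀ → τ e ≠ e₀ := by
    intro e he hh
    exact he (by rw [← hτ0] at hh; exact hτ.injective hh)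
  refine ⟨fun e => if h : e = e₀ then true else c' ⟨e, h⟩,
          fun e => if h : e = e₀ then e₀ else (comp' ⟨e, h⟩).1, ?_, ?_, ?_, ?_, ?_⟩
  · intro e hne
    by_cases h : e = e₀
    · subst h; exact absurd hσ0 hne
    · have hs : σ e ≠ e₀ := hσne e h
      have hres : res σ e₀ ⟨e, h⟩ = ⟨σ e, hs⟩ := dif_neg hs
      have hrne : res σ e₀ ⟨e, h⟩ ≠ ⟨e, h⟩ := by
        rw [hres]; intro hc; exact hne (congrArg Subtype.val hc)
      have hv := hg.1 ⟨e, h⟩ hrne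
      rw [hres] at hv
      simpa [dif_neg hs, dif_neg h] using hv
  · intro e hne
    by_cases h : e = e₀
    · subst h; exact absurd hτ0 hne
    · have hs : τ e ≠ e₀ := hτne e h
      have hres : res τ e₀ ⟨e, h⟩ = ⟨τ e, hs⟩ := dif_neg hs
      have hrne : res τ e₀ ⟨e, h⟩ ≠ ⟨e, h⟩ := by
        rw [hres]; intro hc; exact hne (congrArg Subtype.val hc)
      have hv := hg.2.1 ⟨e, h⟩ hrne
      rw [hres] at hv
      simpa [dif_neg hs, dif_neg h] using hv
  · intro e
    by_cases h : e = e₀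
    · subst h; rw [hσ0]
    · have hs : σ e ≠ e₀ := hσne e h
      have hres : res σ e₀ ⟨e, h⟩ = ⟨σ e, hs⟩ := dif_neg hs
      have hv := hg.2.2.1 ⟨e, h⟩
      rw [hres] at hv
      simpa [dif_neg hs, dif_neg h] using congrArg Subtype.val hv
  · intro e
    by_cases h : e = e₀
    · subst h; rw [hτ0]
    · have hs : τ e ≠ e₀ := hτne e h
      have hres : res τ e₀ ⟨e, h⟩ = ⟨τ e, hs⟩ := dif_neg hs
      have hv := hg.2.2.2.1 ⟨e, h⟩
      rw [hres] at hv
      simpa [dif_neg hs, dif_neg h] using congrArg Subtype.val hv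
  · intro e f s t hne hcomp hte htf
    by_cases he : e = e₀ <;> by_cases hf : f = e₀
    · subst he; subst hf
      have hst : s ≠ t := by
        rcases hne with h | h
        · exact absurd rfl h
        · exact h
      simp [hst]
    · exfalso
      simp only [dif_pos he, dif_neg hf] at hcomp
      exact (comp' ⟨f, hf⟩).2 hcomp.symm
    · exfalso
      simp only [dif_pos hf, dif_neg he] at hcomp
      exact (comp' ⟨e, he⟩).2 hcomp
    · have hne' : (⟨e, he⟩ : {y : E // y ≠ e₀}) ≠ ⟨f, hf⟩ ∨ s ≠ t := by
        rcases hne with h | h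
        · exact Or.inl (fun hc => h (congrArg Subtype.val hc))
        · exact Or.inr h
      have hcomp' : comp' ⟨e, he⟩ = comp' ⟨f, hf⟩ := by
        apply Subtype.ext
        simpa [dif_neg he, dif_neg hf] using hcomp
      have hv := hg.2.2.2.2 ⟨e, he⟩ ⟨f, hf⟩ s t hne' hcomp' (tok_res he hte) (tok_res hf htf)
      simpa [dif_neg he, dif_neg hf] using hv

lemma extendB {σ τ : E → E} {e₀ : E} (hσ0 : σ e₀ = e₀) (hτ0 : τ e₀ ≠ e₀)
    (hσ : Function.Involutive σ) (hτ : Function.Involutive τ)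
    {c' : {y : E // y ≠ e₀} → Bool} {comp' : {y : E // y ≠ e₀} → {y : E // y ≠ e₀}}
    (hg : Good (res σ e₀) (res τ e₀) c' comp') :
    ∃ (c : E → Bool) (comp : E → E), Good σ τ c comp := by
  classical
  have hσne : ∀ e : E, e ≠ e₀ → σ e ≠ e₀ := by
    intro e he hh
    exact he (by rw [← hσ0] at hh; exact hσ.injective hh)
  have hτe0 : ∀ e : E, τ e = e₀ → e = τ e₀ := by
    intro e h
    have := congrArg τ h
    rwa [hτ e] at this
  have hytok : res τ e₀ (⟨τ e₀, hτ0⟩ : {y : E // y ≠ e₀}) = ⟨τ e₀, hτ0⟩ := dif_pos (hτ e₀)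
  refine ⟨fun e => if h : e = e₀ then !(c' ⟨τ e₀, hτ0⟩) else c' ⟨e, h⟩,
          fun e => if h : e = e₀ then (comp' ⟨τ e₀, hτ0⟩).1 else (comp' ⟨e, h⟩).1,
          ?_, ?_, ?_, ?_, ?_⟩
  · intro e hne
    by_cases h : e = e₀
    · rw [h] at hne; exact absurd hσ0 hne
    · have hs : σ e ≠ e₀ := hσne e h
      have hres : res σ e₀ ⟨e, h⟩ = ⟨σ e, hs⟩ := dif_neg hs
      have hrne : res σ e₀ ⟨e, h⟩ ≠ ⟨e, h⟩ := by
        rw [hres]; intro hc; exact hne (congrArg Subtype.val hc)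
      have hv := hg.1 ⟨e, h⟩ hrne
      rw [hres] at hv
      simpa [dif_neg hs, dif_neg h] using hv
  · intro e hne
    by_cases h : e = e₀
    · subst h
      simp only [dif_neg hτ0, dif_pos rfl]
      simp
    · by_cases h2 : τ e = e₀
      · have hey : e = τ e₀ := hτe0 e h2
        simp only [dif_pos h2, dif_neg h]
        have : (⟨e, h⟩ : {y : E // y ≠ e₀}) = ⟨τ e₀, hτ0⟩ := Subtype.ext hey
        rw [this]
        simp
      · have hres : res τ e₀ ⟨e, h⟩ = ⟨τ e, h2⟩ := dif_neg h2
        have hrne : res τ e₀ ⟨e, h⟩ ≠ ⟨e, h⟩ := by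
          rw [hres]; intro hc; exact hne (congrArg Subtype.val hc)
        have hv := hg.2.1 ⟨e, h⟩ hrne
        rw [hres] at hv
        simpa [dif_neg h2, dif_neg h] using hv
  · intro e
    by_cases h : e = e₀
    · subst h; rw [hσ0]
    · have hs : σ e ≠ e₀ := hσne e h
      have hres : res σ e₀ ⟨e, h⟩ = ⟨σ e, hs⟩ := dif_neg hs
      have hv := hg.2.2.1 ⟨e, h⟩
      rw [hres] at hv
      simpa [dif_neg hs, dif_neg h] using congrArg Subtype.val hv
  · intro e
    by_cases h : e = e₀
    · subst h
      simp only [dif_neg hτ0, dif_pos rfl]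
      simp
    · by_cases h2 : τ e = e₀
      · have hey : e = τ e₀ := hτe0 e h2
        simp only [dif_pos h2, dif_neg h]
        have : (⟨e, h⟩ : {y : E // y ≠ e₀}) = ⟨τ e₀, hτ0⟩ := Subtype.ext hey
        rw [this]
      · have hres : res τ e₀ ⟨e, h⟩ = ⟨τ e, h2⟩ := dif_neg h2
        have hv := hg.2.2.2.1 ⟨e, h⟩
        rw [hres] at hv
        simpa [dif_neg h2, dif_neg h] using congrArg Subtype.val hv
  · intro e f s t hne hcomp hte htf
    have hkey : ∀ (g : E) (hg2 : g ≠ e₀) (u : Bool), tok σ τ g u →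
        comp' ⟨g, hg2⟩ = comp' ⟨τ e₀, hτ0⟩ →
        ((c' ⟨g, hg2⟩ = c' ⟨τ e₀, hτ0⟩) ↔ (u ≠ true)) := by
      intro g hg2 u htg hcg
      apply hg.2.2.2.2 ⟨g, hg2⟩ ⟨τ e₀, hτ0⟩ u true ?_ hcg (tok_res hg2 htg) hytok
      by_cases hgy : (⟨g, hg2⟩ : {y : E // y ≠ e₀}) = ⟨τ e₀, hτ0⟩
      · right
        intro hu
        rw [hu] at htg
        have hgv : g = τ e₀ := congrArg Subtype.val hgy
        have : τ g = g := htg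
        rw [hgv, hτ e₀] at this
        exact hτ0 this.symm
      · exact Or.inl hgy
    by_cases he : e = e₀ <;> by_cases hf : f = e₀
    · exfalso
      have hs : s = false := by
        cases s
        · rfl
        · exact absurd (he ▸ hte : τ e₀ = e₀) hτ0
      have ht : t = false := by
        cases t
        · rfl
        · exact absurd (hf ▸ htf : τ e₀ = e₀) hτ0
      rcases hne with h | h
      · exact h (he.trans hf.symm)
      · rw [hs, ht] at h; exact h rfl
    · -- e = e₀, f ≠ e₀
      have hs : s = false := by
        cases s
        · rfl
        · exact absurd (he ▸ hte : τ e₀ = e₀) hτ0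
      simp only [dif_pos he, dif_neg hf] at hcomp ⊢
      have hcf : comp' ⟨f, hf⟩ = comp' ⟨τ e₀, hτ0⟩ := Subtype.ext hcomp.symm
      have hk := hkey f hf t htf hcf
      rw [hs, show ((!c' ⟨τ e₀, hτ0⟩) = c' ⟨f, hf⟩) ↔ ¬(c' ⟨f, hf⟩ = c' ⟨τ e₀, hτ0⟩) from
        by cases c' ⟨τ e₀, hτ0⟩ <;> cases c' ⟨f, hf⟩ <;> simp, not_iff_not.mpr hk]
      cases t <;> simp
    · -- e ≠ e₀, f = e₀
      have ht : t = false := by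
        cases t
        · rfl
        · exact absurd (hf ▸ htf : τ e₀ = e₀) hτ0
      simp only [dif_pos hf, dif_neg he] at hcomp ⊢
      have hce : comp' ⟨e, he⟩ = comp' ⟨τ e₀, hτ0⟩ := Subtype.ext hcomp
      have hk := hkey e he s hte hce
      rw [ht, show ((c' ⟨e, he⟩ = !c' ⟨τ e₀, hτ0⟩)) ↔ ¬(c' ⟨e, he⟩ = c' ⟨τ e₀, hτ0⟩) from
        by cases c' ⟨τ e₀, hτ0⟩ <;> cases c' ⟨e, he⟩ <;> simp, not_iff_not.mpr hk]
      cases s <;> simp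
    · have hne' : (⟨e, he⟩ : {y : E // y ≠ e₀}) ≠ ⟨f, hf⟩ ∨ s ≠ t := by
        rcases hne with h | h
        · exact Or.inl (fun hc => h (congrArg Subtype.val hc))
        · exact Or.inr h
      have hcomp' : comp' ⟨e, he⟩ = comp' ⟨f, hf⟩ := by
        apply Subtype.ext
        simpa [dif_neg he, dif_neg hf] using hcomp
      have hv := hg.2.2.2.2 ⟨e, he⟩ ⟨f, hf⟩ s t hne' hcomp' (tok_res he hte) (tok_res hf htf)
      simpa [dif_neg he, dif_neg hf] using hv

lemma extendC {σ τ : E → E} {e₀ : E} (hσ0 : σ e₀ ≠ e₀) (hτ0 : τ e₀ ≠ e₀)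
    (hσ : Function.Involutive σ) (hτ : Function.Involutive τ)
    {c' : {y : E // y ≠ e₀} → Bool} {comp' : {y : E // y ≠ e₀} → {y : E // y ≠ e₀}}
    (hg : Good (res σ e₀) (res τ e₀) c' comp') :
    ∃ (c : E → Bool) (comp : E → E), Good σ τ c comp := by
  classical
  have hxtok : res σ e₀ (⟨σ e₀, hσ0⟩ : {y : E // y ≠ e₀}) = ⟨σ e₀, hσ0⟩ := dif_pos (hσ e₀)
  have hytok : res τ e₀ (⟨τ e₀, hτ0⟩ : {y : E // y ≠ e₀}) = ⟨τ e₀, hτ0⟩ := dif_pos (hτ e₀)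
  have hcc : comp' ⟨σ e₀, hσ0⟩ = comp' ⟨τ e₀, hτ0⟩ → c' ⟨σ e₀, hσ0⟩ = c' ⟨τ e₀, hτ0⟩ := by
    intro h
    have hv := hg.2.2.2.2 ⟨σ e₀, hσ0⟩ ⟨τ e₀, hτ0⟩ false true (Or.inr (by simp)) h hxtok hytok
    simpa using hv
  have hσe0 : ∀ e : E, σ e = e₀ → e = σ e₀ := by
    intro e h; have := congrArg σ h; rwa [hσ e] at this
  have hτe0 : ∀ e : E, τ e = e₀ → e = τ e₀ := by
    intro e h; have := congrArg τ h; rwa [hτ e] at this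
  have hcx : (if comp' ⟨σ e₀, hσ0⟩ = comp' ⟨τ e₀, hτ0⟩ ∧ ¬(c' ⟨τ e₀, hτ0⟩ = c' ⟨σ e₀, hσ0⟩)
      then !(c' ⟨σ e₀, hσ0⟩) else c' ⟨σ e₀, hσ0⟩) = c' ⟨σ e₀, hσ0⟩ := by
    rw [if_neg]; rintro ⟨h1, h2⟩; exact h2 (hcc h1).symm
  have hcy : (if comp' ⟨τ e₀, hτ0⟩ = comp' ⟨τ e₀, hτ0⟩ ∧ ¬(c' ⟨τ e₀, hτ0⟩ = c' ⟨σ e₀, hσ0⟩)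
      then !(c' ⟨τ e₀, hτ0⟩) else c' ⟨τ e₀, hτ0⟩) = c' ⟨σ e₀, hσ0⟩ := by
    by_cases hxy : c' ⟨τ e₀, hτ0⟩ = c' ⟨σ e₀, hσ0⟩
    · rw [if_neg (fun hcond => hcond.2 hxy)]; exact hxy
    · rw [if_pos ⟨rfl, hxy⟩]
      cases hv1 : c' ⟨τ e₀, hτ0⟩ <;> cases hv2 : c' ⟨σ e₀, hσ0⟩ <;> simp_all
  refine ⟨fun e => if h : e = e₀ then !(c' ⟨σ e₀, hσ0⟩) else
            (if comp' ⟨e, h⟩ = comp' ⟨τ e₀, hτ0⟩ ∧ ¬(c' ⟨τ e₀, hτ0⟩ = c' ⟨σ e₀, hσ0⟩)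
             then !(c' ⟨e, h⟩) else c' ⟨e, h⟩),
          fun e => if h : e = e₀ then (comp' ⟨σ e₀, hσ0⟩).1 else
            (if comp' ⟨e, h⟩ = comp' ⟨τ e₀, hτ0⟩ then (comp' ⟨σ e₀, hσ0⟩).1
             else (comp' ⟨e, h⟩).1), ?_, ?_, ?_, ?_, ?_⟩
  · intro e hne
    by_cases h : e = e₀
    · rw [h]
      simp only [dif_neg hσ0, dif_pos rfl]
      rw [hcx]
      simp
    · by_cases h2 : σ e = e₀
      · have hmk : (⟨e, h⟩ : {y : E // y ≠ e₀}) = ⟨σ e₀, hσ0⟩ := Subtype.ext (hσe0 e h2)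
        rw [h2]
        simp only [dif_pos rfl, dif_neg h, hmk]
        rw [hcx]
        simp
      · have hres : res σ e₀ ⟨e, h⟩ = ⟨σ e, h2⟩ := dif_neg h2
        have hcv : c' ⟨σ e, h2⟩ ≠ c' ⟨e, h⟩ := by
          have hrne : res σ e₀ ⟨e, h⟩ ≠ ⟨e, h⟩ := by
            rw [hres]; intro hc; exact hne (congrArg Subtype.val hc)
          have hv := hg.1 ⟨e, h⟩ hrne; rwa [hres] at hv
        have hcm : comp' ⟨σ e, h2⟩ = comp' ⟨e, h⟩ := by
          have hv := hg.2.2.1 ⟨e, h⟩; rwa [hres] at hv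
        simp only [dif_neg h, dif_neg h2, hcm]
        split_ifs with hcond
        · exact fun hx => hcv (Bool.not_inj hx)
        · exact hcv
  · intro e hne
    by_cases h : e = e₀
    · rw [h]
      simp only [dif_neg hτ0, dif_pos rfl, true_and]
      clear hcx hcy hcc hg hxtok hytok hσe0 hτe0 hne
      split_ifs <;> cases hv1 : c' ⟨τ e₀, hτ0⟩ <;> cases hv2 : c' ⟨σ e₀, hσ0⟩ <;> simp_all
    · by_cases h2 : τ e = e₀
      · have hmk : (⟨e, h⟩ : {y : E // y ≠ e₀}) = ⟨τ e₀, hτ0⟩ := Subtype.ext (hτe0 e h2)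
        rw [h2]
        simp only [dif_pos rfl, dif_neg h, hmk, true_and]
        clear hcx hcy hcc hg hxtok hytok hσe0 hτe0 hne hmk
        split_ifs <;> cases hv1 : c' ⟨τ e₀, hτ0⟩ <;> cases hv2 : c' ⟨σ e₀, hσ0⟩ <;> simp_all
      · have hres : res τ e₀ ⟨e, h⟩ = ⟨τ e, h2⟩ := dif_neg h2
        have hcv : c' ⟨τ e, h2⟩ ≠ c' ⟨e, h⟩ := by
          have hrne : res τ e₀ ⟨e, h⟩ ≠ ⟨e, h⟩ := by
            rw [hres]; intro hc; exact hne (congrArg Subtype.val hc)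
          have hv := hg.2.1 ⟨e, h⟩ hrne; rwa [hres] at hv
        have hcm : comp' ⟨τ e, h2⟩ = comp' ⟨e, h⟩ := by
          have hv := hg.2.2.2.1 ⟨e, h⟩; rwa [hres] at hv
        simp only [dif_neg h, dif_neg h2, hcm]
        split_ifs with hcond
        · exact fun hx => hcv (Bool.not_inj hx)
        · exact hcv
  · intro e
    by_cases h : e = e₀
    · rw [h]
      simp only [dif_neg hσ0, dif_pos rfl]
      split_ifs <;> rfl
    · by_cases h2 : σ e = e₀
      · have hmk : (⟨e, h⟩ : {y : E // y ≠ e₀}) = ⟨σ e₀, hσ0⟩ := Subtype.ext (hσe0 e h2)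
        rw [h2]
        simp only [dif_pos rfl, dif_neg h, hmk]
        split_ifs <;> rfl
      · have hres : res σ e₀ ⟨e, h⟩ = ⟨σ e, h2⟩ := dif_neg h2
        have hcm : comp' ⟨σ e, h2⟩ = comp' ⟨e, h⟩ := by
          have hv := hg.2.2.1 ⟨e, h⟩; rwa [hres] at hv
        simp only [dif_neg h, dif_neg h2, hcm]
  · intro e
    by_cases h : e = e₀
    · rw [h]
      simp only [dif_neg hτ0, dif_pos rfl]
      split_ifs <;> rfl
    · by_cases h2 : τ e = e₀
      · have hmk : (⟨e, h⟩ : {y : E // y ≠ e₀}) = ⟨τ e₀, hτ0⟩ := Subtype.ext (hτe0 e h2)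
        rw [h2]
        simp only [dif_pos rfl, dif_neg h, hmk]
        split_ifs <;> rfl
      · have hres : res τ e₀ ⟨e, h⟩ = ⟨τ e, h2⟩ := dif_neg h2
        have hcm : comp' ⟨τ e, h2⟩ = comp' ⟨e, h⟩ := by
          have hv := hg.2.2.2.1 ⟨e, h⟩; rwa [hres] at hv
        simp only [dif_neg h, dif_neg h2, hcm]
  · intro e f s t hne hcomp hte htf
    have he : e ≠ e₀ := by
      intro hh
      cases s
      · exact hσ0 (hh ▸ hte : σ e₀ = e₀)
      · exact hτ0 (hh ▸ hte : τ e₀ = e₀)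
    have hf : f ≠ e₀ := by
      intro hh
      cases t
      · exact hσ0 (hh ▸ htf : σ e₀ = e₀)
      · exact hτ0 (hh ▸ htf : τ e₀ = e₀)
    have hte' := tok_res (σ := σ) (τ := τ) he hte
    have htf' := tok_res (σ := σ) (τ := τ) hf htf
    have hne1 : ((⟨e, he⟩ : {y : E // y ≠ e₀}) ≠ ⟨σ e₀, hσ0⟩) ∨ s ≠ false := by
      by_cases hex : (⟨e, he⟩ : {y : E // y ≠ e₀}) = ⟨σ e₀, hσ0⟩
      · right; intro hs
        rw [hs] at hte
        have h1 : σ e = e := hte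
        have h2 : e = σ e₀ := congrArg Subtype.val hex
        rw [h2, hσ e₀] at h1
        exact hσ0 h1.symm
      · exact Or.inl hex
    have hne1f : ((⟨f, hf⟩ : {y : E // y ≠ e₀}) ≠ ⟨σ e₀, hσ0⟩) ∨ t ≠ false := by
      by_cases hex : (⟨f, hf⟩ : {y : E // y ≠ e₀}) = ⟨σ e₀, hσ0⟩
      · right; intro hs
        rw [hs] at htf
        have h1 : σ f = f := htf
        have h2 : f = σ e₀ := congrArg Subtype.val hex
        rw [h2, hσ e₀] at h1
        exact hσ0 h1.symm
      · exact Or.inl hex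
    have hne2 : ((⟨f, hf⟩ : {y : E // y ≠ e₀}) ≠ ⟨τ e₀, hτ0⟩) ∨ t ≠ true := by
      by_cases hex : (⟨f, hf⟩ : {y : E // y ≠ e₀}) = ⟨τ e₀, hτ0⟩
      · right; intro hs
        rw [hs] at htf
        have h1 : τ f = f := htf
        have h2 : f = τ e₀ := congrArg Subtype.val hex
        rw [h2, hτ e₀] at h1
        exact hτ0 h1.symm
      · exact Or.inl hex
    have hne2e : ((⟨e, he⟩ : {y : E // y ≠ e₀}) ≠ ⟨τ e₀, hτ0⟩) ∨ s ≠ true := by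
      by_cases hex : (⟨e, he⟩ : {y : E // y ≠ e₀}) = ⟨τ e₀, hτ0⟩
      · right; intro hs
        rw [hs] at hte
        have h1 : τ e = e := hte
        have h2 : e = τ e₀ := congrArg Subtype.val hex
        rw [h2, hτ e₀] at h1
        exact hτ0 h1.symm
      · exact Or.inl hex
    have hne' : ((⟨e, he⟩ : {y : E // y ≠ e₀}) ≠ ⟨f, hf⟩) ∨ s ≠ t := by
      rcases hne with hh | hh
      · exact Or.inl (fun hc => hh (congrArg Subtype.val hc))
      · exact Or.inr hh
    simp only [dif_neg he, dif_neg hf] at hcomp ⊢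
    by_cases hPe : comp' ⟨e, he⟩ = comp' ⟨τ e₀, hτ0⟩ <;>
      by_cases hPf : comp' ⟨f, hf⟩ = comp' ⟨τ e₀, hτ0⟩
    · -- both in the y-fiber
      have hcomp' : comp' ⟨e, he⟩ = comp' ⟨f, hf⟩ := hPe.trans hPf.symm
      have hv := hg.2.2.2.2 ⟨e, he⟩ ⟨f, hf⟩ s t hne' hcomp' hte' htf'
      by_cases hW : c' ⟨τ e₀, hτ0⟩ = c' ⟨σ e₀, hσ0⟩
      · rw [if_neg (fun hc => hc.2 hW), if_neg (fun hc => hc.2 hW)]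
        exact hv
      · rw [if_pos ⟨hPe, hW⟩, if_pos ⟨hPf, hW⟩]
        rw [show ((!c' ⟨e, he⟩) = !c' ⟨f, hf⟩) ↔ (c' ⟨e, he⟩ = c' ⟨f, hf⟩) from by
          cases c' ⟨e, he⟩ <;> cases c' ⟨f, hf⟩ <;> simp]
        exact hv
    · -- e in y-fiber, f elsewhere: f must be in x-fiber
      rw [if_pos hPe, if_neg hPf] at hcomp
      have hFX : comp' ⟨f, hf⟩ = comp' ⟨σ e₀, hσ0⟩ := Subtype.ext hcomp.symm
      have R1 := hg.2.2.2.2 ⟨f, hf⟩ ⟨σ e₀, hσ0⟩ t false hne1f hFX htf' hxtok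
      have R2 := hg.2.2.2.2 ⟨e, he⟩ ⟨τ e₀, hτ0⟩ s true hne2e hPe hte' hytok
      by_cases hW : c' ⟨τ e₀, hτ0⟩ = c' ⟨σ e₀, hσ0⟩
      · rw [if_neg (fun hc => hc.2 hW), if_neg (fun hc => hPf hc.1)]
        rw [hW] at R2
        clear * - R1 R2
        cases hA : c' ⟨σ e₀, hσ0⟩ <;> cases hE : c' ⟨e, he⟩ <;> cases hF : c' ⟨f, hf⟩ <;>
          cases s <;> cases t <;> simp_all
      · rw [if_pos ⟨hPe, hW⟩, if_neg (fun hc => hPf hc.1)]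
        have hW2 : c' ⟨τ e₀, hτ0⟩ = !c' ⟨σ e₀, hσ0⟩ := by
          cases hv1 : c' ⟨τ e₀, hτ0⟩ <;> cases hv2 : c' ⟨σ e₀, hσ0⟩ <;>
            first | rfl | exact absurd (hv1.trans hv2.symm) hW
        rw [hW2] at R2
        clear * - R1 R2
        cases hA : c' ⟨σ e₀, hσ0⟩ <;> cases hE : c' ⟨e, he⟩ <;> cases hF : c' ⟨f, hf⟩ <;>
          cases s <;> cases t <;> simp_all
    · -- f in y-fiber, e in x-fiber
      rw [if_neg hPe, if_pos hPf] at hcomp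
      have hEX : comp' ⟨e, he⟩ = comp' ⟨σ e₀, hσ0⟩ := Subtype.ext hcomp
      have R1 := hg.2.2.2.2 ⟨e, he⟩ ⟨σ e₀, hσ0⟩ s false hne1 hEX hte' hxtok
      have R2 := hg.2.2.2.2 ⟨f, hf⟩ ⟨τ e₀, hτ0⟩ t true hne2 hPf htf' hytok
      by_cases hW : c' ⟨τ e₀, hτ0⟩ = c' ⟨σ e₀, hσ0⟩
      · rw [if_neg (fun hc => hPe hc.1), if_neg (fun hc => hc.2 hW)]
        rw [hW] at R2
        clear * - R1 R2
        cases hA : c' ⟨σ e₀, hσ0⟩ <;> cases hE : c' ⟨e, he⟩ <;> cases hF : c' ⟨f, hf⟩ <;>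
          cases s <;> cases t <;> simp_all
      · rw [if_neg (fun hc => hPe hc.1), if_pos ⟨hPf, hW⟩]
        have hW2 : c' ⟨τ e₀, hτ0⟩ = !c' ⟨σ e₀, hσ0⟩ := by
          cases hv1 : c' ⟨τ e₀, hτ0⟩ <;> cases hv2 : c' ⟨σ e₀, hσ0⟩ <;>
            first | rfl | exact absurd (hv1.trans hv2.symm) hW
        rw [hW2] at R2
        clear * - R1 R2
        cases hA : c' ⟨σ e₀, hσ0⟩ <;> cases hE : c' ⟨e, he⟩ <;> cases hF : c' ⟨f, hf⟩ <;>
          cases s <;> cases t <;> simp_all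
    · -- neither in y-fiber
      rw [if_neg hPe, if_neg hPf] at hcomp
      have hcomp' : comp' ⟨e, he⟩ = comp' ⟨f, hf⟩ := Subtype.ext hcomp
      have hv := hg.2.2.2.2 ⟨e, he⟩ ⟨f, hf⟩ s t hne' hcomp' hte' htf'
      rw [if_neg (fun hc => hPe hc.1), if_neg (fun hc => hPf hc.1)]
      exact hv

lemma Good.symm {σ τ : E → E} {c : E → Bool} {comp : E → E} (h : Good σ τ c comp) :
    Good τ σ c comp := by
  obtain ⟨h1, h2, h3, h4, h5⟩ := h
  refine ⟨h2, h1, h4, h3, ?_⟩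
  intro e f s t hne hcomp he hf
  have key := h5 e f (!s) (!t) ?_ hcomp ?_ ?_
  · rw [key]; cases s <;> cases t <;> simp
  · rcases hne with h | h
    · exact Or.inl h
    · right; cases s <;> cases t <;> simp_all
  · cases s <;> simpa [tok] using he
  · cases t <;> simpa [tok] using hf


theorem DEC : ∀ (n : ℕ) (E : Type*) [Fintype E] [DecidableEq E] (σ τ : E → E),
    Function.Involutive σ → Function.Involutive τ → Fintype.card E = n →
    ∃ (c : E → Bool) (comp : E → E), Good σ τ c comp := by
  intro n
  induction n with
  | zero =>
    intro E _ _ σ τ hσ hτ hcard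
    have : IsEmpty E := Fintype.card_eq_zero_iff.mp hcard
    exact ⟨fun _ => true, id, fun e => isEmptyElim e, fun e => isEmptyElim e,
      fun e => isEmptyElim e, fun e => isEmptyElim e, fun e => isEmptyElim e⟩
  | succ n ih =>
    intro E _ _ σ τ hσ hτ hcard
    have hne : Nonempty E := Fintype.card_pos_iff.mp (by omega)
    obtain ⟨e₀⟩ := hne
    have hcard' : Fintype.card {y : E // y ≠ e₀} = n := by
      have h1 : Fintype.card {y : E // y ≠ e₀} = Fintype.card E - Fintype.card {y : E // y = e₀} :=
        Fintype.card_subtype_compl _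
      rw [h1, Fintype.card_subtype_eq, hcard]; omega
    obtain ⟨c', comp', hg⟩ := ih {y : E // y ≠ e₀} (res σ e₀) (res τ e₀)
      (res_invol hσ e₀) (res_invol hτ e₀) hcard'
    by_cases h1 : σ e₀ = e₀ <;> by_cases h2 : τ e₀ = e₀
    · exact extendA h1 h2 hσ hτ hg
    · exact extendB h1 h2 hσ hτ hg
    · obtain ⟨c, comp, hgood⟩ := extendB h2 h1 hτ hσ hg.symm
      exact ⟨c, comp, hgood.symm⟩
    · exact extendC h1 h2 hσ hτ hg


lemma card_le_two_unique {s : Finset E} (hs : s.card ≤ 2) {a b c : E}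
    (ha : a ∈ s) (hb : b ∈ s) (hc : c ∈ s) (hac : a ≠ c) (hbc : b ≠ c) : a = b := by
  by_contra hab
  have hsub : ({a, b, c} : Finset E) ⊆ s := by
    intro z hz
    simp only [Finset.mem_insert, Finset.mem_singleton] at hz
    rcases hz with rfl | rfl | rfl <;> assumption
  have h3 : ({a, b, c} : Finset E).card = 3 := by
    rw [Finset.card_insert_of_notMem (by simp [hab, hac]),
        Finset.card_insert_of_notMem (by simp [hbc]), Finset.card_singleton]
  have := Finset.card_le_card hsub
  omega

lemma partner_exists {V : Type*} [Fintype E] [DecidableEq V] (vs : E → V)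
    (hdeg : ∀ v, (Finset.univ.filter fun e => vs e = v).card ≤ 2) :
    ∃ σ : E → E, Function.Involutive σ ∧ (∀ e, vs (σ e) = vs e) ∧
      (∀ e f, f ≠ e → vs f = vs e → σ e = f) := by
  classical
  set σ : E → E := fun e => if h : ∃ f, f ≠ e ∧ vs f = vs e then h.choose else e with hσdef
  have hvs : ∀ e, vs (σ e) = vs e := by
    intro e
    by_cases h : ∃ f, f ≠ e ∧ vs f = vs e
    · simp only [hσdef, dif_pos h]
      exact h.choose_spec.2
    · simp only [hσdef, dif_neg h]
  have key : ∀ e f, f ≠ e → vs f = vs e → σ e = f := by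
    intro e f hfe hvf
    have h : ∃ g, g ≠ e ∧ vs g = vs e := ⟨f, hfe, hvf⟩
    have hch := h.choose_spec
    have hσe : σ e = h.choose := by simp only [hσdef, dif_pos h]
    refine card_le_two_unique (s := Finset.univ.filter fun g => vs g = vs e)
      (hdeg (vs e)) ?_ ?_ ?_ ?_ hfe
    · exact Finset.mem_filter.mpr ⟨Finset.mem_univ _, hvs e⟩
    · exact Finset.mem_filter.mpr ⟨Finset.mem_univ _, hvf⟩
    · exact Finset.mem_filter.mpr ⟨Finset.mem_univ _, rfl⟩
    · rw [hσe]; exact hch.1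
  refine ⟨σ, ?_, hvs, key⟩
  intro e
  by_cases he : σ e = e
  · rw [he, he]
  · exact key (σ e) e (fun hc => he hc.symm) (hvs e).symm

lemma classify [Fintype E] {σ : E → E} {c : E → Bool} {comp : E → E}
    (hinv : Function.Involutive σ)
    (hval : ∀ e, σ e ≠ e → c (σ e) ≠ c e)
    (hcomp : ∀ e, comp (σ e) = comp e)
    (hpair2 : ∀ e f, e ≠ f → comp e = comp f → σ e = e → σ f = f → c e ≠ c f)
    (S : Finset E) (hcl : ∀ e ∈ S, σ e ∈ S) (r : E) :
    (∑ e ∈ S.filter (fun e => comp e = r), (if c e then (1 : ℤ) else -1)) = 0 ∨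
    ∃ e, e ∈ S ∧ comp e = r ∧ σ e = e ∧
      (∑ e ∈ S.filter (fun e => comp e = r), (if c e then (1 : ℤ) else -1))
        = (if c e then (1 : ℤ) else -1) := by
  classical
  set F := S.filter (fun e => comp e = r) with hF
  have hsplit : ∑ e ∈ F, (if c e then (1:ℤ) else -1)
      = ∑ e ∈ F.filter (fun e => σ e = e), (if c e then (1:ℤ) else -1)
      + ∑ e ∈ F.filter (fun e => ¬(σ e = e)), (if c e then (1:ℤ) else -1) :=
    (Finset.sum_filter_add_sum_filter_not F _ _).symm
  have hzero : ∑ e ∈ F.filter (fun e => ¬(σ e = e)), (if c e then (1:ℤ) else -1) = 0 := by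
    refine Finset.sum_involution (fun a _ => σ a) ?_ ?_ ?_ ?_
    · intro a ha
      rw [Finset.mem_filter] at ha
      have hv := hval a ha.2
      cases h1 : c a <;> cases h2 : c (σ a) <;> simp_all
    · intro a ha _
      rw [Finset.mem_filter] at ha
      exact ha.2
    · intro a ha
      rw [Finset.mem_filter, hF, Finset.mem_filter] at ha
      obtain ⟨⟨haS, har⟩, hane⟩ := ha
      simp only [Finset.mem_filter, hF]
      exact ⟨⟨hcl a haS, by rw [hcomp a]; exact har⟩,
        by rw [hinv a]; exact fun hc => hane hc.symm⟩
    · intro a _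
      exact hinv a
  have hcard : (F.filter (fun e => σ e = e)).card ≤ 2 := by
    by_contra hcon
    push_neg at hcon
    obtain ⟨B, hBsub, hB3⟩ := Finset.exists_subset_card_eq (show 3 ≤ _ from hcon)
    obtain ⟨x, y, z, hxy, hxz, hyz, rfl⟩ := Finset.card_eq_three.mp hB3
    have hx := hBsub (Finset.mem_insert_self _ _)
    have hy := hBsub (Finset.mem_insert_of_mem (Finset.mem_insert_self _ _))
    have hz := hBsub (Finset.mem_insert_of_mem (Finset.mem_insert_of_mem
      (Finset.mem_singleton_self _)))
    rw [Finset.mem_filter, hF, Finset.mem_filter] at hx hy hz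
    have h1 := hpair2 x y hxy (hx.1.2.trans hy.1.2.symm) hx.2 hy.2
    have h2 := hpair2 x z hxz (hx.1.2.trans hz.1.2.symm) hx.2 hz.2
    have h3 := hpair2 y z hyz (hy.1.2.trans hz.1.2.symm) hy.2 hz.2
    cases hcx : c x <;> cases hcy : c y <;> cases hcz : c z <;> simp_all
  have hcases : (F.filter (fun e => σ e = e)).card = 0 ∨
      (F.filter (fun e => σ e = e)).card = 1 ∨ (F.filter (fun e => σ e = e)).card = 2 := by
    omega
  rcases hcases with h | h | h
  · left
    have hemp : F.filter (fun e => σ e = e) = ∅ := Finset.card_eq_zero.mp h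
    rw [hsplit, hzero, hemp, Finset.sum_empty, add_zero]
  · obtain ⟨x, hxA⟩ := Finset.card_eq_one.mp h
    right
    have hxmem : x ∈ F.filter (fun e => σ e = e) := by rw [hxA]; simp
    rw [Finset.mem_filter, hF, Finset.mem_filter] at hxmem
    exact ⟨x, hxmem.1.1, hxmem.1.2, hxmem.2,
      by rw [hsplit, hzero, hxA, Finset.sum_singleton, add_zero]⟩
  · obtain ⟨x, y, hxy, hA⟩ := Finset.card_eq_two.mp h
    left
    have hxmem : x ∈ F.filter (fun e => σ e = e) := by rw [hA]; simp
    have hymem : y ∈ F.filter (fun e => σ e = e) := by rw [hA]; simp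
    rw [Finset.mem_filter, hF, Finset.mem_filter] at hxmem hymem
    have h1 := hpair2 x y hxy (hxmem.1.2.trans hymem.1.2.symm) hxmem.2 hymem.2
    rw [hsplit, hzero, hA, Finset.sum_pair hxy, add_zero]
    cases hcx : c x <;> cases hcy : c y <;> simp_all

lemma sum_pm_parity (X : Finset E) (v : E → ℤ) (hv : ∀ x ∈ X, v x = 1 ∨ v x = -1) :
    (2 : ℤ) ∣ ((∑ x ∈ X, v x) - X.card) := by
  have h : (∑ x ∈ X, v x) - (X.card : ℤ) = ∑ x ∈ X, (v x - 1) := by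
    rw [Finset.sum_sub_distrib, Finset.sum_const, nsmul_eq_mul, mul_one]
  rw [h]
  refine Finset.dvd_sum ?_
  intro x hx
  rcases hv x hx with h1 | h1 <;> rw [h1] <;> norm_num

lemma signed_subset [DecidableEq E] (X : Finset E) (v : E → ℤ)
    (hv : ∀ x ∈ X, v x = 1 ∨ v x = -1)
    (t : ℤ) (hle : t.natAbs ≤ X.card) (hpar : (2 : ℤ) ∣ (t + X.card)) :
    ∃ ε : E → ℤ, (∀ x ∈ X, ε x = 1 ∨ ε x = -1) ∧ ∑ x ∈ X, ε x * v x = t := by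
  classical
  have hm : ∃ m : ℕ, m ≤ X.card ∧ (m : ℤ) * 2 = t + X.card := by
    obtain ⟨u, hu⟩ := hpar
    refine ⟨u.toNat, ?_, ?_⟩ <;> omega
  obtain ⟨m, hm1, hm2⟩ := hm
  obtain ⟨U, hU, hUcard⟩ := Finset.exists_subset_card_eq hm1
  refine ⟨fun x => if x ∈ U then v x else -(v x), ?_, ?_⟩
  · intro x hx
    rcases hv x hx with h | h <;> by_cases hxu : x ∈ U <;> simp [hxu, h]
  · have hsum : ∀ x ∈ X, (if x ∈ U then v x else -(v x)) * v x
        = (if x ∈ U then (1:ℤ) else -1) := by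
      intro x hx
      rcases hv x hx with h | h <;> by_cases hxu : x ∈ U <;> simp [hxu, h]
    rw [Finset.sum_congr rfl hsum]
    rw [← Finset.sum_filter_add_sum_filter_not X (fun x => x ∈ U)]
    have hfU : X.filter (fun x => x ∈ U) = U := by
      rw [Finset.filter_mem_eq_inter]
      exact Finset.inter_eq_right.mpr hU
    have e1 : ∑ x ∈ X.filter (fun x => x ∈ U), (if x ∈ U then (1:ℤ) else -1) = m := by
      rw [Finset.sum_congr rfl (fun x hx => if_pos (Finset.mem_filter.mp hx).2),
        Finset.sum_const, hfU, hUcard]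
      simp
    have hcneg : (X.filter (fun x => ¬(x ∈ U))).card = X.card - m := by
      have hh := Finset.card_filter_add_card_filter_not (s := X)
        (p := fun x => x ∈ U)
      rw [hfU, hUcard] at hh
      omega
    have e2 : ∑ x ∈ X.filter (fun x => ¬(x ∈ U)), (if x ∈ U then (1:ℤ) else -1)
        = -((X.card : ℤ) - m) := by
      rw [Finset.sum_congr rfl (fun x hx => if_neg (Finset.mem_filter.mp hx).2),
        Finset.sum_const, hcneg]
      simp only [nsmul_eq_mul, mul_neg, mul_one]
      omega
    rw [e1, e2]
    omega

lemma selection [DecidableEq E] (R : Finset E) (a b : E → ℤ)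
    (ha : ∀ r ∈ R, a r = 0 ∨ a r = 1 ∨ a r = -1)
    (hb : ∀ r ∈ R, b r = 0 ∨ b r = 1 ∨ b r = -1)
    (hab : ∀ r ∈ R, a r ≠ 0 → b r ≠ 0 → a r = b r)
    (hpa : ¬ (2:ℤ) ∣ ∑ r ∈ R, a r) (hpb : ¬ (2:ℤ) ∣ ∑ r ∈ R, b r) :
    ∃ ε : E → ℤ, (∀ r ∈ R, ε r = 1 ∨ ε r = -1) ∧
      (∑ r ∈ R, ε r * a r = 1) ∧ (∑ r ∈ R, ε r * b r = 1) := by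
  classical
  set Ra := R.filter (fun r => a r ≠ 0) with hRadef
  set Rb := R.filter (fun r => b r ≠ 0) with hRbdef
  set R2 := Ra.filter (fun r => b r ≠ 0) with hR2def
  set Ra0 := Ra.filter (fun r => ¬(b r ≠ 0)) with hRa0def
  set Rb0 := Rb.filter (fun r => ¬(a r ≠ 0)) with hRb0def
  have hR2R : ∀ r ∈ R2, r ∈ R := fun r hr =>
    Finset.filter_subset _ _ (Finset.filter_subset _ _ hr)
  have hRa0R : ∀ r ∈ Ra0, r ∈ R := fun r hr =>
    Finset.filter_subset _ _ (Finset.filter_subset _ _ hr)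
  have hRb0R : ∀ r ∈ Rb0, r ∈ R := fun r hr =>
    Finset.filter_subset _ _ (Finset.filter_subset _ _ hr)
  have hR2a : ∀ r ∈ R2, a r = 1 ∨ a r = -1 := by
    intro r hr
    have h1 : a r ≠ 0 := (Finset.mem_filter.mp (Finset.filter_subset _ _ hr : r ∈ Ra)).2
    rcases ha r (hR2R r hr) with h | h | h
    · exact absurd h h1
    · exact Or.inl h
    · exact Or.inr h
  have hR2b : ∀ r ∈ R2, b r = 1 ∨ b r = -1 := by
    intro r hr
    have h1 : b r ≠ 0 := (Finset.mem_filter.mp hr).2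
    rcases hb r (hR2R r hr) with h | h | h
    · exact absurd h h1
    · exact Or.inl h
    · exact Or.inr h
  have hRa0a : ∀ r ∈ Ra0, a r = 1 ∨ a r = -1 := by
    intro r hr
    have h1 : a r ≠ 0 := (Finset.mem_filter.mp (Finset.filter_subset _ _ hr : r ∈ Ra)).2
    rcases ha r (hRa0R r hr) with h | h | h
    · exact absurd h h1
    · exact Or.inl h
    · exact Or.inr h
  have hRb0b : ∀ r ∈ Rb0, b r = 1 ∨ b r = -1 := by
    intro r hr
    have h1 : b r ≠ 0 := (Finset.mem_filter.mp (Finset.filter_subset _ _ hr : r ∈ Rb)).2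
    rcases hb r (hRb0R r hr) with h | h | h
    · exact absurd h h1
    · exact Or.inl h
    · exact Or.inr h
  -- decomposition of the a-sum
  have hsa : ∑ r ∈ Ra, a r = ∑ r ∈ R, a r :=
    Finset.sum_filter_of_ne (fun x _ hx => hx)
  have hsa2 : ∑ r ∈ R2, a r + ∑ r ∈ Ra0, a r = ∑ r ∈ Ra, a r :=
    Finset.sum_filter_add_sum_filter_not Ra _ _
  have hsb : ∑ r ∈ Rb, b r = ∑ r ∈ R, b r :=
    Finset.sum_filter_of_ne (fun x _ hx => hx)
  have hRb2 : Rb.filter (fun r => a r ≠ 0) = R2 := by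
    rw [hR2def, hRadef, hRbdef, Finset.filter_comm]
  have hsb2 : ∑ r ∈ R2, b r + ∑ r ∈ Rb0, b r = ∑ r ∈ Rb, b r := by
    rw [← hRb2]
    exact Finset.sum_filter_add_sum_filter_not Rb _ _
  -- parity bookkeeping
  have hd1 := sum_pm_parity R2 a hR2a
  have hd2 := sum_pm_parity Ra0 a hRa0a
  have hd3 := sum_pm_parity R2 b hR2b
  have hd4 := sum_pm_parity Rb0 b hRb0b
  have hodd1 : ¬ (2:ℤ) ∣ ((R2.card : ℤ) + Ra0.card) := by
    intro hdvd
    apply hpa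
    rw [← hsa, ← hsa2]
    omega
  have hodd2 : ¬ (2:ℤ) ∣ ((R2.card : ℤ) + Rb0.card) := by
    intro hdvd
    apply hpb
    rw [← hsb, ← hsb2]
    omega
  have hkey : ∃ t2 ta tb : ℤ, t2 + ta = 1 ∧ t2 + tb = 1 ∧
      t2.natAbs ≤ R2.card ∧ (2:ℤ) ∣ (t2 + R2.card) ∧
      ta.natAbs ≤ Ra0.card ∧ (2:ℤ) ∣ (ta + Ra0.card) ∧
      tb.natAbs ≤ Rb0.card ∧ (2:ℤ) ∣ (tb + Rb0.card) := by
    by_cases h2 : (2:ℤ) ∣ (R2.card : ℤ)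
    · refine ⟨0, 1, 1, by ring, by ring, by simp, by simpa using h2, ?_, ?_, ?_, ?_⟩ <;> omega
    · refine ⟨1, 0, 0, by ring, by ring, ?_, ?_, ?_, ?_, ?_, ?_⟩ <;> omega
  obtain ⟨t2, ta, tb, hta, htb, c1, c2, c3, c4, c5, c6⟩ := hkey
  obtain ⟨ε2, hε2pm, hε2⟩ := signed_subset R2 a hR2a t2 c1 c2
  obtain ⟨εa, hεapm, hεa⟩ := signed_subset Ra0 a hRa0a ta c3 c4
  obtain ⟨εb, hεbpm, hεb⟩ := signed_subset Rb0 b hRb0b tb c5 c6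
  refine ⟨fun r => if r ∈ R2 then ε2 r else if r ∈ Ra0 then εa r else if r ∈ Rb0 then εb r
    else 1, ?_, ?_, ?_⟩
  · intro r _
    by_cases h1 : r ∈ R2
    · simp only [if_pos h1]; exact hε2pm r h1
    · by_cases h2 : r ∈ Ra0
      · simp only [if_neg h1, if_pos h2]; exact hεapm r h2
      · by_cases h3 : r ∈ Rb0
        · simp only [if_neg h1, if_neg h2, if_pos h3]; exact hεbpm r h3
        · simp only [if_neg h1, if_neg h2, if_neg h3]
          left; trivial
  · -- a-sum
    have hz : ∀ x ∈ R, (if x ∈ R2 then ε2 x else if x ∈ Ra0 then εa x else if x ∈ Rb0 then εb x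
        else 1) * a x ≠ 0 → a x ≠ 0 := by
      intro x _ hx hax
      exact hx (by rw [hax, mul_zero])
    rw [← Finset.sum_filter_of_ne hz, ← hRadef,
      ← Finset.sum_filter_add_sum_filter_not Ra (fun r => b r ≠ 0), ← hR2def, ← hRa0def]
    have e1 : ∑ r ∈ R2, (if r ∈ R2 then ε2 r else if r ∈ Ra0 then εa r
        else if r ∈ Rb0 then εb r else 1) * a r = t2 := by
      rw [← hε2]
      exact Finset.sum_congr rfl (fun x hx => by rw [if_pos hx])
    have e2 : ∑ r ∈ Ra0, (if r ∈ R2 then ε2 r else if r ∈ Ra0 then εa r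
        else if r ∈ Rb0 then εb r else 1) * a r = ta := by
      rw [← hεa]
      refine Finset.sum_congr rfl (fun x hx => ?_)
      have hx2 : x ∉ R2 := by
        intro hc
        exact (Finset.mem_filter.mp hx).2 (Finset.mem_filter.mp hc).2
      rw [if_neg hx2, if_pos hx]
    rw [e1, e2, hta]
  · -- b-sum
    have hz : ∀ x ∈ R, (if x ∈ R2 then ε2 x else if x ∈ Ra0 then εa x else if x ∈ Rb0 then εb x
        else 1) * b x ≠ 0 → b x ≠ 0 := by
      intro x _ hx hbx
      exact hx (by rw [hbx, mul_zero])
    rw [← Finset.sum_filter_of_ne hz, ← hRbdef,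
      ← Finset.sum_filter_add_sum_filter_not Rb (fun r => a r ≠ 0), hRb2, ← hRb0def]
    have e1 : ∑ r ∈ R2, (if r ∈ R2 then ε2 r else if r ∈ Ra0 then εa r
        else if r ∈ Rb0 then εb r else 1) * b r = t2 := by
      rw [← hε2]
      refine Finset.sum_congr rfl (fun x hx => ?_)
      rw [if_pos hx]
      have hax : a x ≠ 0 := (Finset.mem_filter.mp (Finset.filter_subset _ _ hx : x ∈ Ra)).2
      have hbx : b x ≠ 0 := (Finset.mem_filter.mp hx).2
      rw [hab x (hR2R x hx) hax hbx]
    have e2 : ∑ r ∈ Rb0, (if r ∈ R2 then ε2 r else if r ∈ Ra0 then εa r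
        else if r ∈ Rb0 then εb r else 1) * b r = tb := by
      rw [← hεb]
      refine Finset.sum_congr rfl (fun x hx => ?_)
      have hax : ¬(a x ≠ 0) := (Finset.mem_filter.mp hx).2
      have hx2 : x ∉ R2 := by
        intro hc
        exact hax (Finset.mem_filter.mp (Finset.filter_subset _ _ hc : x ∈ Ra)).2
      have hx3 : x ∉ Ra0 := by
        intro hc
        exact hax (Finset.mem_filter.mp (Finset.filter_subset _ _ hc : x ∈ Ra)).2
      rw [if_neg hx2, if_neg hx3, if_pos hx]
    rw [e1, e2, htb]

end BalColor

/-- Proposition `hornprop`.  Let `Θ` be a finite directed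
graph in which every source (vertex of in-degree `0`) has out-degree at most
`2`, and every other vertex has in-degree at most `2` and out-degree at most
its in-degree.  A *source-edge* is an edge emanating from a source; a
*sink-edge* is an edge entering a vertex of out-degree `0`.  If `Θ` has
exactly `2k−1` source-edges and `2i−1` sink-edges, then there is an
alternating `2`-coloring of the edges with exactly `k` red source-edges and
exactly `i` red sink-edges. -/
theorem exists_balanced_coloring {V E : Type*} [Fintype E] [DecidableEq E]
    [DecidableEq V] (vs vt : E → V) (k i : ℕ) (hk : 1 ≤ k) (hi : 1 ≤ i)
    (hdeg : ∀ v, inDeg vt v ≤ 2 ∧ outDeg vs v ≤ 2 ∧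
      (inDeg vt v ≠ 0 → outDeg vs v ≤ inDeg vt v))
    (hsrc : (Finset.univ.filter fun e => inDeg vt (vs e) = 0).card = 2 * k - 1)
    (hsnk : (Finset.univ.filter fun e => outDeg vs (vt e) = 0).card = 2 * i - 1) :
    ∃ c : E → Bool, ValidColoring vs vt c ∧
      (Finset.univ.filter fun e => inDeg vt (vs e) = 0 ∧ c e = true).card = k ∧
      (Finset.univ.filter fun e => outDeg vs (vt e) = 0 ∧ c e = true).card = i := by
  classical
  obtain ⟨σ, hσinv, hσvs, hσkey⟩ := BalColor.partner_exists vs (fun v => (hdeg v).2.1)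
  obtain ⟨τ, hτinv, hτvt, hτkey⟩ := BalColor.partner_exists vt (fun v => (hdeg v).1)
  obtain ⟨c₀, comp, hv1, hv2, hc1, hc2, hpair⟩ :=
    BalColor.DEC (Fintype.card E) E σ τ hσinv hτinv rfl
  set S := Finset.univ.filter (fun e : E => inDeg vt (vs e) = 0) with hSdef
  set T := Finset.univ.filter (fun e : E => outDeg vs (vt e) = 0) with hTdef
  have hSclosed : ∀ e ∈ S, σ e ∈ S := by
    intro e he
    rw [hSdef, Finset.mem_filter] at he ⊢
    exact ⟨Finset.mem_univ _, by rw [hσvs e]; exact he.2⟩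
  have hTclosed : ∀ e ∈ T, τ e ∈ T := by
    intro e he
    rw [hTdef, Finset.mem_filter] at he ⊢
    exact ⟨Finset.mem_univ _, by rw [hτvt e]; exact he.2⟩
  have hpair2σ : ∀ e f, e ≠ f → comp e = comp f → σ e = e → σ f = f → c₀ e ≠ c₀ f := by
    intro e f hne hc hσe hσf
    have hh := hpair e f false false (Or.inl hne) hc hσe hσf
    simpa using hh
  have hpair2τ : ∀ e f, e ≠ f → comp e = comp f → τ e = e → τ f = f → c₀ e ≠ c₀ f := by
    intro e f hne hc hτe hτf
    have hh := hpair e f true true (Or.inl hne) hc hτe hτf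
    simpa using hh
  have hpaircross : ∀ e f, comp e = comp f → σ e = e → τ f = f → c₀ e = c₀ f := by
    intro e f hc hσe hτf
    have hh := hpair e f false true (Or.inr (by simp)) hc hσe hτf
    simpa using hh
  set R := Finset.univ.image comp with hRdef
  set a : E → ℤ := fun r => ∑ e ∈ S.filter (fun e => comp e = r),
    (if c₀ e then (1:ℤ) else -1) with hadef
  set b : E → ℤ := fun r => ∑ e ∈ T.filter (fun e => comp e = r),
    (if c₀ e then (1:ℤ) else -1) with hbdef
  have hclaS := fun r => BalColor.classify hσinv hv1 hc1 hpair2σ S hSclosed r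
  have hclaT := fun r => BalColor.classify hτinv hv2 hc2 hpair2τ T hTclosed r
  have hA : ∀ r ∈ R, a r = 0 ∨ a r = 1 ∨ a r = -1 := by
    intro r _
    rcases hclaS r with h | ⟨e, _, _, _, he⟩
    · exact Or.inl h
    · simp only [hadef]
      rw [he]; cases c₀ e <;> simp
  have hB : ∀ r ∈ R, b r = 0 ∨ b r = 1 ∨ b r = -1 := by
    intro r _
    rcases hclaT r with h | ⟨e, _, _, _, he⟩
    · exact Or.inl h
    · simp only [hbdef]
      rw [he]; cases c₀ e <;> simp
  have hAB : ∀ r ∈ R, a r ≠ 0 → b r ≠ 0 → a r = b r := by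
    intro r _ h1 h2
    rcases hclaS r with h | ⟨e, _, her, hσe, hae⟩
    · exact absurd h h1
    rcases hclaT r with h | ⟨f, _, hfr, hτf, hbf⟩
    · exact absurd h h2
    have hcc := hpaircross e f (her.trans hfr.symm) hσe hτf
    simp only [hadef, hbdef]
    rw [hae, hbf, hcc]
  have hmapsS : ∀ e ∈ S, comp e ∈ R :=
    fun e _ => Finset.mem_image_of_mem comp (Finset.mem_univ e)
  have hmapsT : ∀ e ∈ T, comp e ∈ R :=
    fun e _ => Finset.mem_image_of_mem comp (Finset.mem_univ e)
  have hsumA : ∑ r ∈ R, a r = ∑ e ∈ S, (if c₀ e then (1:ℤ) else -1) :=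
    Finset.sum_fiberwise_of_maps_to hmapsS _
  have hsumB : ∑ r ∈ R, b r = ∑ e ∈ T, (if c₀ e then (1:ℤ) else -1) :=
    Finset.sum_fiberwise_of_maps_to hmapsT _
  have hpmS : ∀ e ∈ S, (if c₀ e then (1:ℤ) else -1) = 1 ∨ (if c₀ e then (1:ℤ) else -1) = -1 :=
    fun e _ => by cases c₀ e <;> simp
  have hpmT : ∀ e ∈ T, (if c₀ e then (1:ℤ) else -1) = 1 ∨ (if c₀ e then (1:ℤ) else -1) = -1 :=
    fun e _ => by cases c₀ e <;> simp
  have hparS := BalColor.sum_pm_parity S _ hpmS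
  have hparT := BalColor.sum_pm_parity T _ hpmT
  have hpa : ¬ (2:ℤ) ∣ ∑ r ∈ R, a r := by
    rw [hsumA]
    intro hdvd
    rw [hsrc] at hparS
    omega
  have hpb : ¬ (2:ℤ) ∣ ∑ r ∈ R, b r := by
    rw [hsumB]
    intro hdvd
    rw [hsnk] at hparT
    omega
  obtain ⟨ε, hεpm, hεa, hεb⟩ := BalColor.selection R a b hA hB hAB hpa hpb
  set c : E → Bool := fun e => if ε (comp e) = 1 then c₀ e else !(c₀ e) with hcdef
  have hcflip : ∀ e f, comp e = comp f → c₀ e ≠ c₀ f → c e ≠ c f := by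
    intro e f hcc hne
    rw [hcdef]
    simp only
    rw [hcc]
    by_cases hεc : ε (comp f) = 1
    · rw [if_pos hεc, if_pos hεc]; exact hne
    · rw [if_neg hεc, if_neg hεc]; exact fun hx => hne (Bool.not_inj hx)
  have hfiber : ∀ (W : Finset E) (r : E), r ∈ R →
      ∑ e ∈ W.filter (fun e => comp e = r), (if c e then (1:ℤ) else -1)
      = ε r * ∑ e ∈ W.filter (fun e => comp e = r), (if c₀ e then (1:ℤ) else -1) := by
    intro W r hr
    rw [Finset.mul_sum]
    refine Finset.sum_congr rfl (fun e he => ?_)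
    have hcompe : comp e = r := (Finset.mem_filter.mp he).2
    rcases hεpm r hr with h1 | h1
    · simp only [hcdef]
      rw [hcompe, h1, if_pos rfl, one_mul]
    · simp only [hcdef]
      rw [hcompe, h1, if_neg (by norm_num : ¬(-1 : ℤ) = 1)]
      cases c₀ e <;> norm_num
  have hsumCS : ∑ e ∈ S, (if c e then (1:ℤ) else -1) = 1 := by
    have hstep : ∑ e ∈ S, (if c e then (1:ℤ) else -1) = ∑ r ∈ R, ε r * a r := by
      rw [← Finset.sum_fiberwise_of_maps_to hmapsS (fun e => if c e then (1:ℤ) else -1)]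
      refine Finset.sum_congr rfl (fun r hr => ?_)
      simp only [hadef]
      exact hfiber S r hr
    rw [hstep, hεa]
  have hsumCT : ∑ e ∈ T, (if c e then (1:ℤ) else -1) = 1 := by
    have hstep : ∑ e ∈ T, (if c e then (1:ℤ) else -1) = ∑ r ∈ R, ε r * b r := by
      rw [← Finset.sum_fiberwise_of_maps_to hmapsT (fun e => if c e then (1:ℤ) else -1)]
      refine Finset.sum_congr rfl (fun r hr => ?_)
      simp only [hbdef]
      exact hfiber T r hr
    rw [hstep, hεb]
  have hfinS : (S.filter (fun e => c e = true)).card = k := by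
    have hsplitc := Finset.sum_filter_add_sum_filter_not S (fun e => c e = true)
      (fun e => if c e then (1:ℤ) else -1)
    have e1 : ∑ e ∈ S.filter (fun e => c e = true), (if c e then (1:ℤ) else -1)
        = ((S.filter (fun e => c e = true)).card : ℤ) := by
      rw [Finset.sum_congr rfl (fun x hx => if_pos ((Finset.mem_filter.mp hx).2 : c x = true))]
      simp
    have e2 : ∑ e ∈ S.filter (fun e => ¬(c e = true)), (if c e then (1:ℤ) else -1)
        = -(((S.filter (fun e => ¬(c e = true))).card : ℤ)) := by
      rw [Finset.sum_congr rfl (fun x hx => if_neg ((Finset.mem_filter.mp hx).2))]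
      simp
    have hcards := Finset.card_filter_add_card_filter_not (s := S)
      (p := fun e => c e = true)
    rw [e1, e2, hsumCS] at hsplitc
    rw [hsrc] at hcards
    omega
  have hfinT : (T.filter (fun e => c e = true)).card = i := by
    have hsplitc := Finset.sum_filter_add_sum_filter_not T (fun e => c e = true)
      (fun e => if c e then (1:ℤ) else -1)
    have e1 : ∑ e ∈ T.filter (fun e => c e = true), (if c e then (1:ℤ) else -1)
        = ((T.filter (fun e => c e = true)).card : ℤ) := by
      rw [Finset.sum_congr rfl (fun x hx => if_pos ((Finset.mem_filter.mp hx).2 : c x = true))]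
      simp
    have e2 : ∑ e ∈ T.filter (fun e => ¬(c e = true)), (if c e then (1:ℤ) else -1)
        = -(((T.filter (fun e => ¬(c e = true))).card : ℤ)) := by
      rw [Finset.sum_congr rfl (fun x hx => if_neg ((Finset.mem_filter.mp hx).2))]
      simp
    have hcards := Finset.card_filter_add_card_filter_not (s := T)
      (p := fun e => c e = true)
    rw [e1, e2, hsumCT] at hsplitc
    rw [hsnk] at hcards
    omega
  refine ⟨c, ⟨?_, ?_⟩, ?_, ?_⟩
  · intro e f hne hvt
    have hτef : τ e = f := hτkey e f (Ne.symm hne) hvt.symm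
    have hτne : τ e ≠ e := by rw [hτef]; exact Ne.symm hne
    have hcf : c₀ (τ e) ≠ c₀ e := hv2 e hτne
    rw [hτef] at hcf
    have hcc : comp f = comp e := by rw [← hτef]; exact hc2 e
    exact fun hx => (hcflip f e hcc hcf) hx.symm
  · intro e f hne hvs
    have hσef : σ e = f := hσkey e f (Ne.symm hne) hvs.symm
    have hσne : σ e ≠ e := by rw [hσef]; exact Ne.symm hne
    have hcf : c₀ (σ e) ≠ c₀ e := hv1 e hσne
    rw [hσef] at hcf
    have hcc : comp f = comp e := by rw [← hσef]; exact hc1 e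
    exact fun hx => (hcflip f e hcc hcf) hx.symm
  · have hset : Finset.univ.filter (fun e => inDeg vt (vs e) = 0 ∧ c e = true)
        = S.filter (fun e => c e = true) := by
      rw [hSdef, Finset.filter_filter]
    rw [hset]
    exact hfinS
  · have hset : Finset.univ.filter (fun e => outDeg vs (vt e) = 0 ∧ c e = true)
        = T.filter (fun e => c e = true) := by
      rw [hTdef, Finset.filter_filter]
    rw [hset]
    exact hfinT
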